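/- Let q, q' be positive integers, n₁ a common divisor of q and q' with n₁² | qq', and m, m', n₂ integers with gcd(m,q) = gcd(m',q') = 1. Define the character sum C = Σ_{γ mod qq'/n₁²} S(m̄, γ; q/n₁) · S(m̄', γ; q'/n₁) · e(n₂γ/(qq'/n₁²)). Then |C| ≤ (qq'/n₁²) · gcd(q/n₁, q'/n₁, n₂). -/

import Mathlib

open scoped BigOperators

/-- `e t = exp(2πit)`. -/
noncomputable def eAdd (t : ℝ) : ℂ := Complex.exp (2 * Real.pi * Complex.I * t)

/-- Kloosterman sum `S(a,b;c) = Σ*_{x mod c} e((ax + b x̄)/c)`. -/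
noncomputable def kloosterman (q : ℕ) (a b : ZMod q) : ℂ :=
  ∑ x ∈ Finset.filter (fun x => Nat.Coprime x q) (Finset.range q),
    eAdd ((((a * (x : ZMod q) + b * ((x : ZMod q))⁻¹).val : ℕ) : ℝ) / q)

lemma eAdd_add (s t : ℝ) : eAdd (s + t) = eAdd s * eAdd t := by
  simp [eAdd, mul_add, Complex.exp_add]

lemma eAdd_int (z : ℤ) : eAdd z = 1 := by
  rw [eAdd, show (2:ℂ) * Real.pi * Complex.I * ((z:ℝ):ℂ) = (z:ℤ) * (2 * Real.pi * Complex.I) by push_cast; ring]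
  exact Complex.exp_int_mul_two_pi_mul_I z

lemma eAdd_eq_of_sub_int {s t : ℝ} (z : ℤ) (h : s - t = z) : eAdd s = eAdd t := by
  have : s = t + z := by linarith [h]
  rw [this, eAdd_add, eAdd_int, mul_one]

lemma abs_eAdd (t : ℝ) : ‖eAdd t‖ = 1 := by
  rw [eAdd, Complex.norm_exp]
  have h : (2 * (Real.pi:ℂ) * Complex.I * (t:ℝ)).re = 0 := by
    simp [Complex.mul_re, Complex.mul_im]
  rw [h, Real.exp_zero]

lemma eAdd_nat_mul (n : ℕ) (t : ℝ) : eAdd (n * t) = eAdd t ^ n := by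
  rw [eAdd, eAdd, ← Complex.exp_nat_mul]
  push_cast
  ring_nf

lemma eAdd_eq_one_iff (t : ℝ) : eAdd t = 1 ↔ ∃ z : ℤ, t = z := by
  rw [eAdd, Complex.exp_eq_one_iff]
  constructor
  · rintro ⟨n, hn⟩
    refine ⟨n, ?_⟩
    have h2 : (2 * (Real.pi:ℂ) * Complex.I) ≠ 0 := by
      simp [Real.pi_ne_zero, Complex.I_ne_zero]
    have ht : (t : ℂ) = n := by
      have : (2 * (Real.pi:ℂ) * Complex.I) * t = (2 * (Real.pi:ℂ) * Complex.I) * n := by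
        rw [hn]; ring
      exact mul_left_cancel₀ h2 this
    exact_mod_cast ht
  · rintro ⟨z, hz⟩
    exact ⟨z, by rw [hz]; push_cast; ring⟩

lemma sum_eAdd_geom (Q : ℕ) (hQ : 0 < Q) (A : ℤ) :
    ∑ γ ∈ Finset.range Q, eAdd ((γ : ℝ) * ((A : ℝ) / (Q : ℝ))) =
      if (Q : ℤ) ∣ A then (Q : ℂ) else 0 := by
  have hQR : (Q : ℝ) ≠ 0 := Nat.cast_ne_zero.mpr hQ.ne'
  simp_rw [eAdd_nat_mul]
  by_cases h : (Q : ℤ) ∣ A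
  · have hr : eAdd ((A : ℝ) / (Q : ℝ)) = 1 := by
      obtain ⟨c, hc⟩ := h
      rw [eAdd_eq_one_iff]
      exact ⟨c, by rw [hc]; push_cast; field_simp⟩
    simp [hr, h]
  · have hr : eAdd ((A : ℝ) / (Q : ℝ)) ≠ 1 := by
      intro hone
      rw [eAdd_eq_one_iff] at hone
      obtain ⟨z, hz⟩ := hone
      apply h
      refine ⟨z, ?_⟩
      have : (A : ℝ) = Q * z := by field_simp at hz; linarith [hz]
      exact_mod_cast this
    rw [geom_sum_eq hr]
    have hpow : eAdd ((A : ℝ) / (Q : ℝ)) ^ Q = 1 := by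
      rw [← eAdd_nat_mul]
      have : (Q : ℝ) * ((A : ℝ) / (Q : ℝ)) = (A : ℤ) := by field_simp
      rw [this, eAdd_int]
    rw [hpow]
    simp [h]

lemma eAdd_val_div {n : ℕ} [NeZero n] (w : ZMod n) (k : ℤ) (h : (k : ZMod n) = w) :
    eAdd ((w.val : ℝ) / n) = eAdd ((k : ℝ) / n) := by
  have hd : (n : ℤ) ∣ ((w.val : ℤ) - k) := by
    rw [← ZMod.intCast_zmod_eq_zero_iff_dvd]
    push_cast
    rw [h, ZMod.natCast_val, ZMod.cast_id, sub_self]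
  obtain ⟨c, hc⟩ := hd
  refine eAdd_eq_of_sub_int c ?_
  have hn : (n : ℝ) ≠ 0 := Nat.cast_ne_zero.mpr (NeZero.ne n)
  have h2 : ((w.val : ℕ) : ℝ) - (k : ℝ) = (n : ℝ) * (c : ℝ) := by exact_mod_cast congrArg (Int.cast : ℤ → ℝ) hc
  rw [div_sub_div_same, h2, mul_div_cancel_left₀ _ hn]

lemma count_lin (a b : ℕ) (n₂ : ℤ) (ha : 0 < a) :
    ((Finset.range a).filter (fun k : ℕ => (a : ℤ) ∣ (b : ℤ) * (k : ℤ) + n₂)).card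
      ≤ Int.gcd (Nat.gcd a b) n₂ := by
  set T := (Finset.range a).filter (fun k : ℕ => (a : ℤ) ∣ (b : ℤ) * (k : ℤ) + n₂) with hT
  rcases T.eq_empty_or_nonempty with h | ⟨k₀, hk₀⟩
  · simp [h]
  · have hk₀' := hk₀
    rw [hT, Finset.mem_filter, Finset.mem_range] at hk₀'
    obtain ⟨hk₀a, hk₀d⟩ := hk₀'
    set e := Nat.gcd a b with he
    have hepos : 0 < e := Nat.gcd_pos_of_pos_left b ha
    have hea : (e : ℤ) ∣ a := Int.natCast_dvd_natCast.mpr (Nat.gcd_dvd_left a b)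
    have heb : (e : ℤ) ∣ b := Int.natCast_dvd_natCast.mpr (Nat.gcd_dvd_right a b)
    have hen : (e : ℤ) ∣ n₂ := by
      have h1 : (e : ℤ) ∣ (b : ℤ) * k₀ + n₂ := hea.trans hk₀d
      have h2 : (e : ℤ) ∣ (b : ℤ) * k₀ := Dvd.dvd.mul_right heb _
      exact (dvd_add_right h2).mp h1
    have hgcd : Int.gcd (e : ℤ) n₂ = e := by
      have := Int.gcd_eq_left (Int.natCast_nonneg e) hen; exact_mod_cast this
    rw [hgcd]
    -- card T ≤ e via k ↦ k / (a / e)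
    set a' := a / e with ha'
    have ha'pos : 0 < a' := Nat.div_pos (Nat.le_of_dvd ha (Nat.gcd_dvd_left a b)) hepos
    have haa' : a = e * a' := (Nat.mul_div_cancel' (Nat.gcd_dvd_left a b)).symm
    -- every k in T is ≡ k₀ mod a'
    have hmod : ∀ k ∈ T, k % a' = k₀ % a' := by
      intro k hk
      rw [hT, Finset.mem_filter, Finset.mem_range] at hk
      obtain ⟨hka, hkd⟩ := hk
      have hd : (a : ℤ) ∣ (b : ℤ) * ((k : ℤ) - k₀) := by
        have := Int.dvd_sub hkd hk₀d
        simpa [mul_sub] using this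
      -- a' ∣ (k - k₀)
      have hb' : (b : ℤ) = e * (b / e : ℕ) := by
        exact_mod_cast congrArg (Nat.cast : ℕ → ℤ) (Nat.mul_div_cancel' (Nat.gcd_dvd_right a b)).symm
      have hcop : Nat.Coprime a' (b / e) := by
        exact Nat.coprime_div_gcd_div_gcd hepos
      have hd2 : (a' : ℤ) ∣ ((b / e : ℕ) : ℤ) * ((k : ℤ) - k₀) := by
        have h3 : ((e : ℤ) * a') ∣ (e : ℤ) * (((b / e : ℕ) : ℤ) * ((k : ℤ) - k₀)) := by
          rw [show ((e:ℤ) * (((b / e : ℕ) : ℤ) * ((k : ℤ) - k₀))) = ((e:ℤ) * ((b / e : ℕ) : ℤ)) * ((k : ℤ) - k₀) by ring, ← hb']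
          rw [show ((e:ℤ) * a') = (a:ℤ) by exact_mod_cast congrArg (Nat.cast : ℕ → ℤ) haa'.symm]
          exact hd
        exact (mul_dvd_mul_iff_left (by exact_mod_cast hepos.ne' : (e:ℤ) ≠ 0)).mp h3
      have hd3 : (a' : ℤ) ∣ ((k : ℤ) - k₀) := by
        have : IsCoprime (a' : ℤ) ((b / e : ℕ) : ℤ) := Int.isCoprime_iff_gcd_eq_one.mpr (by rw [Int.gcd_natCast_natCast]; exact hcop)
        exact this.dvd_of_dvd_mul_left hd2
      have : k₀ ≡ k [MOD a'] := (Nat.modEq_iff_dvd).mpr (by simpa using hd3)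
      exact this.symm
    have hinj : Set.InjOn (fun k : ℕ => k / a') T := by
      intro k hk k' hk' hkk
      have h1 := hmod k hk
      have h2 := hmod k' hk'
      have hk1 := Nat.div_add_mod k a'
      have hk2 := Nat.div_add_mod k' a'
      have hkk' : k / a' = k' / a' := hkk
      have hmul : a' * (k / a') = a' * (k' / a') := by rw [hkk']
      omega
    have hsub : ∀ k ∈ T, k / a' ∈ Finset.range e := by
      intro k hk
      rw [hT, Finset.mem_filter, Finset.mem_range] at hk
      rw [Finset.mem_range]
      have hlt : k < e * a' := haa' ▸ hk.1
      exact Nat.div_lt_of_lt_mul (lt_of_lt_of_le hlt (le_of_eq (mul_comm e a')))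
    calc T.card ≤ (Finset.range e).card := Finset.card_le_card_of_injOn _ hsub hinj
      _ = e := Finset.card_range e

lemma myInnerSum (a b : ℕ) [NeZero a] [NeZero b] (m m' n₂ : ℤ) (x y : ℕ) :
    ∑ γ ∈ Finset.range (a * b),
      eAdd (((((m : ZMod a))⁻¹ * (x : ZMod a) + (γ : ZMod a) * ((x : ZMod a))⁻¹).val : ℝ) / a)
      * eAdd (((((m' : ZMod b))⁻¹ * (y : ZMod b) + (γ : ZMod b) * ((y : ZMod b))⁻¹).val : ℝ) / b)
      * eAdd ((((n₂ : ZMod (a * b)) * (γ : ZMod (a * b))).val : ℝ) / (a * b))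
    = eAdd (((((m : ZMod a))⁻¹ * (x : ZMod a)).val : ℝ) / a)
      * eAdd (((((m' : ZMod b))⁻¹ * (y : ZMod b)).val : ℝ) / b)
      * (if ((a * b : ℕ) : ℤ) ∣ ((b : ℤ) * ((((x : ZMod a))⁻¹).val : ℤ)
            + (a : ℤ) * ((((y : ZMod b))⁻¹).val : ℤ) + n₂)
          then ((a * b : ℕ) : ℂ) else 0) := by
  haveI : NeZero (a * b) := ⟨mul_ne_zero (NeZero.ne a) (NeZero.ne b)⟩
  have hapos : 0 < a := Nat.pos_of_ne_zero (NeZero.ne a)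
  have hbpos : 0 < b := Nat.pos_of_ne_zero (NeZero.ne b)
  have haR : (a : ℝ) ≠ 0 := Nat.cast_ne_zero.mpr hapos.ne'
  have hbR : (b : ℝ) ≠ 0 := Nat.cast_ne_zero.mpr hbpos.ne'
  set X : ℤ := ((((x : ZMod a))⁻¹).val : ℤ) with hX
  set Y : ℤ := ((((y : ZMod b))⁻¹).val : ℤ) with hY
  set A : ℤ := (b : ℤ) * X + (a : ℤ) * Y + n₂ with hA
  have hterm : ∀ γ ∈ Finset.range (a * b),
      eAdd (((((m : ZMod a))⁻¹ * (x : ZMod a) + (γ : ZMod a) * ((x : ZMod a))⁻¹).val : ℝ) / a)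
      * eAdd (((((m' : ZMod b))⁻¹ * (y : ZMod b) + (γ : ZMod b) * ((y : ZMod b))⁻¹).val : ℝ) / b)
      * eAdd ((((n₂ : ZMod (a * b)) * (γ : ZMod (a * b))).val : ℝ) / (a * b))
      = (eAdd (((((m : ZMod a))⁻¹ * (x : ZMod a)).val : ℝ) / a)
        * eAdd (((((m' : ZMod b))⁻¹ * (y : ZMod b)).val : ℝ) / b))
        * eAdd ((γ : ℝ) * ((A : ℝ) / ((a * b : ℕ) : ℝ))) := by
    intro γ _
    have h1 : eAdd (((((m : ZMod a))⁻¹ * (x : ZMod a) + (γ : ZMod a) * ((x : ZMod a))⁻¹).val : ℝ) / a)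
        = eAdd (((((m : ZMod a))⁻¹ * (x : ZMod a)).val : ℝ) / a) * eAdd ((γ : ℝ) * ((X : ℝ) / a)) := by
      rw [eAdd_val_div ((((m : ZMod a))⁻¹ * (x : ZMod a) + (γ : ZMod a) * ((x : ZMod a))⁻¹))
        (((((m : ZMod a))⁻¹ * (x : ZMod a)).val : ℤ) + (γ : ℤ) * X)
        (by simp only [hX, hY]; push_cast [ZMod.natCast_val, ZMod.cast_id]; ring),
        show ((((((m : ZMod a))⁻¹ * (x : ZMod a)).val : ℤ) + (γ : ℤ) * X : ℤ) : ℝ) / a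
          = ((((m : ZMod a))⁻¹ * (x : ZMod a)).val : ℝ) / a + (γ : ℝ) * ((X : ℝ) / a) by push_cast; ring,
        eAdd_add]
    have h2 : eAdd (((((m' : ZMod b))⁻¹ * (y : ZMod b) + (γ : ZMod b) * ((y : ZMod b))⁻¹).val : ℝ) / b)
        = eAdd (((((m' : ZMod b))⁻¹ * (y : ZMod b)).val : ℝ) / b) * eAdd ((γ : ℝ) * ((Y : ℝ) / b)) := by
      rw [eAdd_val_div ((((m' : ZMod b))⁻¹ * (y : ZMod b) + (γ : ZMod b) * ((y : ZMod b))⁻¹))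
        (((((m' : ZMod b))⁻¹ * (y : ZMod b)).val : ℤ) + (γ : ℤ) * Y)
        (by simp only [hX, hY]; push_cast [ZMod.natCast_val, ZMod.cast_id]; ring),
        show ((((((m' : ZMod b))⁻¹ * (y : ZMod b)).val : ℤ) + (γ : ℤ) * Y : ℤ) : ℝ) / b
          = ((((m' : ZMod b))⁻¹ * (y : ZMod b)).val : ℝ) / b + (γ : ℝ) * ((Y : ℝ) / b) by push_cast; ring,
        eAdd_add]
    have h3 : eAdd ((((n₂ : ZMod (a * b)) * (γ : ZMod (a * b))).val : ℝ) / (a * b))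
        = eAdd ((γ : ℝ) * ((n₂ : ℝ) / ((a * b : ℕ) : ℝ))) := by
      rw [show ((a : ℕ) : ℝ) * b = ((a * b : ℕ) : ℝ) by push_cast; ring]
      rw [eAdd_val_div ((n₂ : ZMod (a * b)) * (γ : ZMod (a * b))) (n₂ * γ) (by push_cast; ring)]
      congr 1
      push_cast
      ring
    rw [h1, h2, h3]
    rw [show (γ : ℝ) * ((A : ℝ) / ((a * b : ℕ) : ℝ))
        = (γ : ℝ) * ((X : ℝ) / a) + ((γ : ℝ) * ((Y : ℝ) / b) + (γ : ℝ) * ((n₂ : ℝ) / ((a * b : ℕ) : ℝ))) by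
      simp only [hA, hX, hY]
      push_cast
      field_simp
      ring,
      eAdd_add, eAdd_add]
    ring
  rw [Finset.sum_congr rfl hterm, ← Finset.mul_sum,
    sum_eAdd_geom (a * b) (Nat.mul_pos hapos hbpos) A, mul_assoc]

theorem character_sum_bound
    (q q' n₁ : ℕ) (hq : 0 < q) (hq' : 0 < q')
    (hn₁ : n₁ ∣ q) (hn₁' : n₁ ∣ q') (hn₁sq : n₁ ^ 2 ∣ q * q')
    (m m' n₂ : ℤ)
    (hm : Int.gcd m q = 1) (hm' : Int.gcd m' q' = 1)
    (C : ℂ)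
    (hC : C = ∑ γ ∈ Finset.range (q * q' / n₁ ^ 2),
      kloosterman (q / n₁) ((m : ZMod (q / n₁)))⁻¹ (γ : ZMod (q / n₁))
      * kloosterman (q' / n₁) ((m' : ZMod (q' / n₁)))⁻¹ (γ : ZMod (q' / n₁))
      * eAdd (((((n₂ : ZMod (q * q' / n₁ ^ 2)) * (γ : ZMod (q * q' / n₁ ^ 2))).val : ℕ) : ℝ)
          / (q * q' / n₁ ^ 2))) :
    ‖C‖ ≤ (q * q' / n₁ ^ 2 : ℕ) * (Int.gcd (Int.gcd ((q / n₁ : ℕ) : ℤ) ((q' / n₁ : ℕ) : ℤ)) n₂) := by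
  have hn₁pos : 0 < n₁ := by
    rcases Nat.eq_zero_or_pos n₁ with h | h
    · exfalso; rw [h] at hn₁; rw [Nat.zero_dvd.mp hn₁] at hq; exact absurd hq (lt_irrefl 0)
    · exact h
  set a := q / n₁ with ha
  set b := q' / n₁ with hb
  have hapos : 0 < a := Nat.div_pos (Nat.le_of_dvd hq hn₁) hn₁pos
  have hbpos : 0 < b := Nat.div_pos (Nat.le_of_dvd hq' hn₁') hn₁pos
  haveI : NeZero a := ⟨hapos.ne'⟩
  haveI : NeZero b := ⟨hbpos.ne'⟩
  have hQab : q * q' / n₁ ^ 2 = a * b := by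
    obtain ⟨u, hu⟩ := hn₁
    obtain ⟨v, hv⟩ := hn₁'
    rw [ha, hb, hu, hv, Nat.mul_div_cancel_left u hn₁pos, Nat.mul_div_cancel_left v hn₁pos,
      show n₁ * u * (n₁ * v) = n₁ ^ 2 * (u * v) by ring,
      Nat.mul_div_cancel_left (u * v) (by positivity)]
  rw [hQab] at hC ⊢
  have hmul : q * q' = n₁ ^ 2 * (a * b) := by
    rw [← hQab]; exact (Nat.mul_div_cancel' hn₁sq).symm
  have hQR : (q : ℝ) * (q' : ℝ) / (n₁ : ℝ) ^ 2 = (a : ℝ) * (b : ℝ) := by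
    have hcast := congrArg (Nat.cast : ℕ → ℝ) hmul
    push_cast at hcast
    rw [hcast]
    exact mul_div_cancel_left₀ _ (by positivity)
  rw [show ((q : ℝ) * (q' : ℝ) / (n₁ : ℝ) ^ 2) = (a : ℝ) * (b : ℝ) from hQR] at hC
  -- abbreviations
  set Fa := (Finset.range a).filter (fun x => Nat.Coprime x a) with hFa
  set Fb := (Finset.range b).filter (fun y => Nat.Coprime y b) with hFb
  set P : ℕ × ℕ → Prop := fun z => ((a * b : ℕ) : ℤ) ∣ ((b : ℤ) * ((((z.1 : ZMod a))⁻¹).val : ℤ)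
      + (a : ℤ) * ((((z.2 : ZMod b))⁻¹).val : ℤ) + n₂) with hP
  have hC2 : C = ∑ x ∈ Fa, ∑ y ∈ Fb,
      eAdd (((((m : ZMod a))⁻¹ * (x : ZMod a)).val : ℝ) / a)
      * eAdd (((((m' : ZMod b))⁻¹ * (y : ZMod b)).val : ℝ) / b)
      * (if P (x, y) then ((a * b : ℕ) : ℂ) else 0) := by
    rw [hC]
    have step1 : ∀ γ : ℕ,
        kloosterman a ((m : ZMod a))⁻¹ (γ : ZMod a)
        * kloosterman b ((m' : ZMod b))⁻¹ (γ : ZMod b)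
        * eAdd ((((n₂ : ZMod (a * b)) * (γ : ZMod (a * b))).val : ℝ) / ((a : ℝ) * (b : ℝ)))
        = ∑ x ∈ Fa, ∑ y ∈ Fb,
          eAdd (((((m : ZMod a))⁻¹ * (x : ZMod a) + (γ : ZMod a) * ((x : ZMod a))⁻¹).val : ℝ) / a)
          * eAdd (((((m' : ZMod b))⁻¹ * (y : ZMod b) + (γ : ZMod b) * ((y : ZMod b))⁻¹).val : ℝ) / b)
          * eAdd ((((n₂ : ZMod (a * b)) * (γ : ZMod (a * b))).val : ℝ) / ((a : ℝ) * (b : ℝ))) := by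
      intro γ
      rw [kloosterman, kloosterman, Finset.sum_mul_sum, Finset.sum_mul]
      exact Finset.sum_congr rfl fun x _ => by rw [Finset.sum_mul]
    rw [Finset.sum_congr rfl fun γ _ => step1 γ, Finset.sum_comm]
    refine Finset.sum_congr rfl fun x _ => ?_
    rw [Finset.sum_comm]
    refine Finset.sum_congr rfl fun y _ => ?_
    exact myInnerSum a b m m' n₂ x y
  rw [hC2]
  -- the solution set
  set S := (Fa ×ˢ Fb).filter P with hS
  set T := (Finset.range a).filter (fun k : ℕ => (a : ℤ) ∣ (b : ℤ) * (k : ℤ) + n₂) with hT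
  -- injectivity of z ↦ val of inverse of z.1
  have hSinj : S.card ≤ T.card := by
    apply Finset.card_le_card_of_injOn (fun z : ℕ × ℕ => (((z.1 : ZMod a))⁻¹).val)
    · intro z hz
      rw [Finset.mem_coe, hS, Finset.mem_filter, Finset.mem_product] at hz
      obtain ⟨⟨hz1, hz2⟩, hzP⟩ := hz
      rw [Finset.mem_coe, hT, Finset.mem_filter, Finset.mem_range]
      constructor
      · exact ZMod.val_lt _
      · have hdvd : (a : ℤ) ∣ ((b : ℤ) * ((((z.1 : ZMod a))⁻¹).val : ℤ)
            + (a : ℤ) * ((((z.2 : ZMod b))⁻¹).val : ℤ) + n₂) := by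
          refine dvd_trans ?_ hzP
          exact_mod_cast Int.natCast_dvd_natCast.mpr ⟨b, rfl⟩
        have h2 : (a : ℤ) ∣ (a : ℤ) * ((((z.2 : ZMod b))⁻¹).val : ℤ) := Dvd.intro _ rfl
        have := Int.dvd_sub hdvd h2
        have heq : ((b : ℤ) * ((((z.1 : ZMod a))⁻¹).val : ℤ)
            + (a : ℤ) * ((((z.2 : ZMod b))⁻¹).val : ℤ) + n₂)
            - (a : ℤ) * ((((z.2 : ZMod b))⁻¹).val : ℤ)
            = (b : ℤ) * ((((z.1 : ZMod a))⁻¹).val : ℤ) + n₂ := by ring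
        rwa [heq] at this
    · intro z hz z' hz' hXX
      simp only at hXX
      rw [hS, Finset.coe_filter, Set.mem_setOf_eq, Finset.mem_product] at hz hz'
      obtain ⟨⟨hz1, hz2⟩, hzP⟩ := hz
      obtain ⟨⟨hz1', hz2'⟩, hzP'⟩ := hz'
      rw [hFa, Finset.mem_filter, Finset.mem_range] at hz1 hz1'
      rw [hFb, Finset.mem_filter, Finset.mem_range] at hz2 hz2'
      -- the inverses in ZMod a are equal
      have hinva : ((z.1 : ZMod a))⁻¹ = ((z'.1 : ZMod a))⁻¹ := by
        have := congrArg (fun v : ℕ => (v : ZMod a)) hXX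
        simpa [ZMod.natCast_val, ZMod.cast_id] using this
      have hu1 : IsUnit ((z.1 : ZMod a)) := (ZMod.isUnit_iff_coprime z.1 a).mpr hz1.2
      have hu1' : IsUnit ((z'.1 : ZMod a)) := (ZMod.isUnit_iff_coprime z'.1 a).mpr hz1'.2
      have hx : (z.1 : ZMod a) = (z'.1 : ZMod a) := by
        calc (z.1 : ZMod a) = (z.1 : ZMod a) * (((z'.1 : ZMod a)) * ((z'.1 : ZMod a))⁻¹) := by
              rw [ZMod.mul_inv_of_unit _ hu1', mul_one]
          _ = ((z.1 : ZMod a) * ((z.1 : ZMod a))⁻¹) * (z'.1 : ZMod a) := by rw [hinva]; ring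
          _ = (z'.1 : ZMod a) := by rw [ZMod.mul_inv_of_unit _ hu1, one_mul]
      have hx' : z.1 = z'.1 := by
        have := congrArg ZMod.val hx
        rwa [ZMod.val_cast_of_lt hz1.1, ZMod.val_cast_of_lt hz1'.1] at this
      -- now the second coordinates
      have hyv : (((z.2 : ZMod b))⁻¹).val = (((z'.2 : ZMod b))⁻¹).val := by
        rw [hP] at hzP hzP'
        have hd := Int.dvd_sub hzP hzP'
        rw [show ((b : ℤ) * ((((z.1 : ZMod a))⁻¹).val : ℤ)
            + (a : ℤ) * ((((z.2 : ZMod b))⁻¹).val : ℤ) + n₂)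
            - ((b : ℤ) * ((((z'.1 : ZMod a))⁻¹).val : ℤ)
            + (a : ℤ) * ((((z'.2 : ZMod b))⁻¹).val : ℤ) + n₂)
            = (b : ℤ) * (((((z.1 : ZMod a))⁻¹).val : ℤ) - ((((z'.1 : ZMod a))⁻¹).val : ℤ))
            + (a : ℤ) * (((((z.2 : ZMod b))⁻¹).val : ℤ) - ((((z'.2 : ZMod b))⁻¹).val : ℤ)) by ring,
          hXX] at hd
        simp only [sub_self, mul_zero, zero_add] at hd
        have hbd : (b : ℤ) ∣ (((((z.2 : ZMod b))⁻¹).val : ℤ) - ((((z'.2 : ZMod b))⁻¹).val : ℤ)) := by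
          obtain ⟨c, hc⟩ := hd
          refine ⟨c, ?_⟩
          have haZ : (a : ℤ) ≠ 0 := Int.natCast_ne_zero.mpr hapos.ne'
          apply mul_left_cancel₀ haZ
          push_cast at hc
          rw [hc]; ring
        have hv1 : (((z.2 : ZMod b))⁻¹).val < b := ZMod.val_lt _
        have hv2 : (((z'.2 : ZMod b))⁻¹).val < b := ZMod.val_lt _
        by_contra hne
        have hdne : ((((z.2 : ZMod b))⁻¹).val : ℤ) - ((((z'.2 : ZMod b))⁻¹).val : ℤ) ≠ 0 := by
          intro h0; apply hne; omega
        have hle : (b : ℤ) ≤ |((((z.2 : ZMod b))⁻¹).val : ℤ) - ((((z'.2 : ZMod b))⁻¹).val : ℤ)| :=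
          Int.le_of_dvd (abs_pos.mpr hdne) ((dvd_abs _ _).mpr hbd)
        have habs : |((((z.2 : ZMod b))⁻¹).val : ℤ) - ((((z'.2 : ZMod b))⁻¹).val : ℤ)| < (b : ℤ) :=
          abs_lt.mpr ⟨by omega, by omega⟩
        linarith
      have hinvb : ((z.2 : ZMod b))⁻¹ = ((z'.2 : ZMod b))⁻¹ := by
        have := congrArg (fun v : ℕ => (v : ZMod b)) hyv
        simpa [ZMod.natCast_val, ZMod.cast_id] using this
      have hu2 : IsUnit ((z.2 : ZMod b)) := (ZMod.isUnit_iff_coprime z.2 b).mpr hz2.2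
      have hu2' : IsUnit ((z'.2 : ZMod b)) := (ZMod.isUnit_iff_coprime z'.2 b).mpr hz2'.2
      have hy : (z.2 : ZMod b) = (z'.2 : ZMod b) := by
        calc (z.2 : ZMod b) = (z.2 : ZMod b) * (((z'.2 : ZMod b)) * ((z'.2 : ZMod b))⁻¹) := by
              rw [ZMod.mul_inv_of_unit _ hu2', mul_one]
          _ = ((z.2 : ZMod b) * ((z.2 : ZMod b))⁻¹) * (z'.2 : ZMod b) := by rw [hinvb]; ring
          _ = (z'.2 : ZMod b) := by rw [ZMod.mul_inv_of_unit _ hu2, one_mul]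
      have hy' : z.2 = z'.2 := by
        have := congrArg ZMod.val hy
        rwa [ZMod.val_cast_of_lt hz2.1, ZMod.val_cast_of_lt hz2'.1] at this
      exact Prod.ext hx' hy'
  -- count T
  have hTcard : (T.card : ℝ) ≤ (Int.gcd (Int.gcd (a : ℤ) (b : ℤ)) n₂ : ℝ) := by
    have := count_lin a b n₂ hapos
    rw [← hT] at this
    have h2 : Int.gcd ((a : ℤ)) ((b : ℤ)) = Nat.gcd a b := Int.gcd_natCast_natCast a b
    rw [h2]
    exact_mod_cast this
  -- bound the absolute value
  calc ‖(∑ x ∈ Fa, ∑ y ∈ Fb,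
        eAdd (((((m : ZMod a))⁻¹ * (x : ZMod a)).val : ℝ) / a)
        * eAdd (((((m' : ZMod b))⁻¹ * (y : ZMod b)).val : ℝ) / b)
        * (if P (x, y) then ((a * b : ℕ) : ℂ) else 0))‖
      ≤ ∑ x ∈ Fa, ∑ y ∈ Fb, ‖(
        eAdd (((((m : ZMod a))⁻¹ * (x : ZMod a)).val : ℝ) / a)
        * eAdd (((((m' : ZMod b))⁻¹ * (y : ZMod b)).val : ℝ) / b)
        * (if P (x, y) then ((a * b : ℕ) : ℂ) else 0))‖ := by
        refine le_trans (norm_sum_le _ _) ?_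
        exact Finset.sum_le_sum fun x _ => norm_sum_le _ _
    _ = ∑ x ∈ Fa, ∑ y ∈ Fb, (if P (x, y) then ((a * b : ℕ) : ℝ) else 0) := by
        refine Finset.sum_congr rfl fun x _ => Finset.sum_congr rfl fun y _ => ?_
        rw [norm_mul, norm_mul, abs_eAdd, abs_eAdd, one_mul, one_mul]
        by_cases h : P (x, y)
        · simp [h, Complex.norm_natCast]
        · simp [h]
    _ = ((a * b : ℕ) : ℝ) * S.card := by
        rw [← Finset.sum_product']
        rw [hS, ← Finset.sum_filter]
        rw [Finset.sum_const, nsmul_eq_mul, mul_comm]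
    _ ≤ ((a * b : ℕ) : ℝ) * T.card := by
        have : (S.card : ℝ) ≤ (T.card : ℝ) := Nat.cast_le.mpr hSinj
        exact mul_le_mul_of_nonneg_left this (by positivity)
    _ ≤ ((a * b : ℕ) : ℝ) * (Int.gcd (Int.gcd (a : ℤ) (b : ℤ)) n₂ : ℝ) :=
        mul_le_mul_of_nonneg_left hTcard (by positivity)
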